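/- Let m, n ≥ 0 and let U = (u_1,…,u_m), V = (v_1,…,v_m), U′ = (u′_1,…,u′_n), V′ = (v′_1,…,v′_n) be complex vectors such that u_i ≠ v_j (1 ≤ i,j ≤ m), u′_i ≠ v′_j (1 ≤ i,j ≤ n), u′_i ≠ u_j and v′_i ≠ v_j (1 ≤ i ≤ n, 1 ≤ j ≤ m). Then for arbitrary functions 𝓕, 𝓖, 𝓘, 𝓙 : ℂ → ℂ: [ Δ(U)Δ(V)Δ(U′)Δ(V′)Δ(U′;V)Δ(V′;U) / ( Δ(U;V)Δ(U′;V′)Δ(U′;U)Δ(V′;V) ) ] · 𝓕(U)𝓖(V)𝓘(U′)𝓙(V′) = (−1)^{C(n+m,2)+n+mn} · det M, where C(n+m,2) is the binomial coefficient (n+m choose 2) and M is the (m+n)×(m+n) block matrix whose upper-left m×m block has entries 𝓕(u_i)𝓖(v_j)/(u_i−v_j), upper-right m×n block has entries 𝓕(u_i)𝓘(u′_j)/(u_i−u′_j), lower-left n×m block has entries 𝓙(v′_i)𝓖(v_j)/(v′_i−v_j), and lower-right n×n block has entries 𝓙(v′_i)𝓘(u′_j)/(v′_i−u′_j). -/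

import Mathlib

open scoped BigOperators

/-- `Δ(W) = ∏_{i<j} (w_j − w_i)`. -/
noncomputable def vdm {k : ℕ} (W : Fin k → ℂ) : ℂ :=
  ∏ p ∈ Finset.univ.filter (fun p : Fin k × Fin k => p.1 < p.2), (W p.2 - W p.1)

/-- `Δ(W;W') = ∏_{i,i'} (w_i − w'_{i'})`. -/
noncomputable def vdm2 {k k' : ℕ} (W : Fin k → ℂ) (W' : Fin k' → ℂ) : ℂ :=
  ∏ i, ∏ i', (W i - W' i')

lemma vdm_ite {k : ℕ} (W : Fin k → ℂ) :
    vdm W = ∏ p : Fin k × Fin k, (if p.1 < p.2 then W p.2 - W p.1 else 1) := by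
  rw [vdm, Finset.prod_filter]

lemma vdm_append {m n : ℕ} (u : Fin m → ℂ) (w : Fin n → ℂ) :
    vdm (Fin.append u w) = vdm u * vdm w * vdm2 w u := by
  rw [vdm_ite]
  rw [← (Equiv.prodCongr finSumFinEquiv finSumFinEquiv).prod_comp
    (fun p : Fin (m+n) × Fin (m+n) => if p.1 < p.2 then Fin.append u w p.2 - Fin.append u w p.1 else 1)]
  rw [Fintype.prod_prod_type]
  rw [Fintype.prod_sum_type]
  simp only [Fintype.prod_sum_type, Equiv.prodCongr_apply, Prod.map, finSumFinEquiv_apply_left,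
    finSumFinEquiv_apply_right, Fin.append_left, Fin.append_right]
  have hmm : ∀ (i j : Fin m), (Fin.castAdd n i < Fin.castAdd n j) = (i < j) := by
    intro i j; simp only [Fin.lt_def, -Fin.val_fin_lt, Fin.coe_castAdd]
  have hnn : ∀ (i j : Fin n), (Fin.natAdd m i < Fin.natAdd m j) = (i < j) := by
    intro i j; simp only [Fin.lt_def, -Fin.val_fin_lt, Fin.coe_natAdd]
    exact propext (by omega)
  have hmn : ∀ (i : Fin m) (j : Fin n), (Fin.castAdd n i < Fin.natAdd m j) = True := by
    intro i j; simp only [Fin.lt_def, -Fin.val_fin_lt, Fin.coe_castAdd, Fin.coe_natAdd]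
    exact propext (by constructor <;> intro h; exacts [trivial, by omega])
  have hnm : ∀ (i : Fin n) (j : Fin m), (Fin.natAdd m i < Fin.castAdd n j) = False := by
    intro i j; simp only [Fin.lt_def, -Fin.val_fin_lt, Fin.coe_castAdd, Fin.coe_natAdd]
    exact propext (by constructor <;> intro h; exacts [by omega, h.elim])
  simp only [hmm, hnn, hmn, hnm, if_true, if_false]
  rw [vdm_ite u, vdm_ite w, vdm2, Fintype.prod_prod_type, Fintype.prod_prod_type]
  simp only [Finset.prod_mul_distrib, Finset.prod_const_one]
  rw [Finset.prod_comm (f := fun x y => w y - u x)]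
  ring

lemma vdm2_append_left {m n k : ℕ} (u : Fin m → ℂ) (w : Fin n → ℂ) (z : Fin k → ℂ) :
    vdm2 (Fin.append u w) z = vdm2 u z * vdm2 w z := by
  rw [vdm2, Fin.prod_univ_add]
  simp only [Fin.append_left, Fin.append_right]; rfl

lemma vdm2_append_right {m n k : ℕ} (z : Fin k → ℂ) (u : Fin m → ℂ) (w : Fin n → ℂ) :
    vdm2 z (Fin.append u w) = vdm2 z u * vdm2 z w := by
  rw [vdm2, vdm2, vdm2, ← Finset.prod_mul_distrib]
  apply Finset.prod_congr rfl
  intro i _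
  rw [Fin.prod_univ_add]
  simp only [Fin.append_left, Fin.append_right]

lemma prod_append {m n : ℕ} (f : ℂ → ℂ) (u : Fin m → ℂ) (w : Fin n → ℂ) :
    (∏ i, f (Fin.append u w i)) = (∏ i, f (u i)) * ∏ i, f (w i) := by
  rw [Fin.prod_univ_add]
  simp only [Fin.append_left, Fin.append_right]

lemma vdm2_swap {k k' : ℕ} (x : Fin k → ℂ) (y : Fin k' → ℂ) :
    vdm2 x y = (-1 : ℂ) ^ (k * k') * vdm2 y x := by
  have h1 : ∀ j, ∏ i, (x i - y j) = (-1:ℂ)^k * ∏ i, (y j - x i) := by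
    intro j
    have : ∀ i : Fin k, x i - y j = (-1) * (y j - x i) := by intro i; ring
    simp only [this]
    rw [Finset.prod_mul_distrib, Finset.prod_const]
    simp
  rw [vdm2, vdm2, Finset.prod_comm]
  simp only [h1]
  rw [Finset.prod_mul_distrib, Finset.prod_const]
  simp [pow_mul]

lemma eq_append {k : ℕ} (x : Fin (k+1) → ℂ) :
    x = Fin.append (x ∘ Fin.castSucc) (fun _ : Fin 1 => x (Fin.last k)) := by
  funext i
  induction i using Fin.lastCases with
  | last =>
      have h : Fin.last k = Fin.natAdd k (0 : Fin 1) := by ext; simp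
      rw [h, Fin.append_right]
  | cast i =>
      have h : i.castSucc = Fin.castAdd 1 i := rfl
      rw [h, Fin.append_left]; rfl

lemma vdm_one (x : Fin 1 → ℂ) : vdm x = 1 := by
  rw [vdm_ite]
  apply Finset.prod_eq_one
  intro p _
  have : ¬ p.1 < p.2 := by omega
  rw [if_neg this]

lemma vdm_snoc {k : ℕ} (x : Fin (k+1) → ℂ) :
    vdm x = vdm (x ∘ Fin.castSucc) * ∏ i : Fin k, (x (Fin.last k) - x (Fin.castSucc i)) := by
  conv_lhs => rw [eq_append x]
  rw [vdm_append, vdm_one, vdm2]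
  simp only [Fin.prod_univ_one, Function.comp_apply]
  ring

lemma vdm2_snoc {k k' : ℕ} (x : Fin (k+1) → ℂ) (y : Fin (k'+1) → ℂ) :
    vdm2 x y = vdm2 (x ∘ Fin.castSucc) (y ∘ Fin.castSucc)
      * (∏ i : Fin k, (x (Fin.castSucc i) - y (Fin.last k')))
      * (∏ j : Fin k', (x (Fin.last k) - y (Fin.castSucc j)))
      * (x (Fin.last k) - y (Fin.last k')) := by
  conv_lhs => rw [eq_append x, eq_append y]
  rw [vdm2_append_left, vdm2_append_right, vdm2_append_right]
  rw [vdm2, vdm2, vdm2, vdm2]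
  simp only [Fin.prod_univ_one, Function.comp_apply]
  ring

lemma cauchy_det : ∀ (k : ℕ) (x y : Fin k → ℂ), (∀ i j, x i ≠ y j) →
    (Matrix.of fun i j => (x i - y j)⁻¹).det
      = (-1 : ℂ) ^ (k.choose 2) * vdm x * vdm y / vdm2 x y := by
  intro k
  induction k with
  | zero =>
      intro x y _
      simp [vdm, vdm2, Matrix.det_fin_zero]
  | succ k IH =>
      intro x y h
      have hsub : ∀ i j, x i - y j ≠ 0 := fun i j => sub_ne_zero.mpr (h i j)
      set ll := Fin.last k with hll
      set C : Matrix (Fin (k+1)) (Fin (k+1)) ℂ := Matrix.of fun i j => (x i - y j)⁻¹ with hC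
      set E : Matrix (Fin (k+1)) (Fin (k+1)) ℂ :=
        Matrix.of (fun i j => if j = ll then (if i = ll then 0 else (-1:ℂ)) else 0) with hE
      set F : Matrix (Fin (k+1)) (Fin (k+1)) ℂ :=
        Matrix.of (fun i j => if i = ll then (if j = ll then 0 else (-1:ℂ)) else 0) with hF
      set B : Matrix (Fin (k+1)) (Fin (k+1)) ℂ :=
        Matrix.of (fun i j => if i = ll then 1 else (x i - y j)⁻¹) with hB
      set B' : Matrix (Fin (k+1)) (Fin (k+1)) ℂ :=
        Matrix.of (fun i j => if i = ll then (if j = ll then (1:ℂ) else 0)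
          else if j = ll then 1 else (x i - y j)⁻¹) with hB'
      set d1 : Fin (k+1) → ℂ := fun i => if i = ll then 1 else (x ll - x i) with hd1
      set d2 : Fin (k+1) → ℂ := fun j => (x ll - y j)⁻¹ with hd2
      set d3 : Fin (k+1) → ℂ := fun i => if i = ll then 1 else (x i - y ll)⁻¹ with hd3
      set d4 : Fin (k+1) → ℂ := fun j => if j = ll then 1 else (y j - y ll) with hd4
      have detL : ((1 : Matrix (Fin (k+1)) (Fin (k+1)) ℂ) + E).det = 1 := by
        rw [Matrix.det_of_upperTriangular]
        · apply Finset.prod_eq_one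
          intro i _
          rw [Matrix.add_apply, Matrix.one_apply_eq]
          simp [hE]
        · intro i j hij
          simp only [id_eq] at hij
          have h1 : i ≠ j := (ne_of_lt hij).symm
          have h2 : j ≠ ll := by
            intro hh
            rw [hh, hll] at hij
            exact absurd hij (not_lt.mpr (Fin.le_last i))
          rw [Matrix.add_apply, Matrix.one_apply_ne h1]
          simp [hE, h2]
      have detR : ((1 : Matrix (Fin (k+1)) (Fin (k+1)) ℂ) + F).det = 1 := by
        rw [Matrix.det_of_lowerTriangular]
        · apply Finset.prod_eq_one
          intro i _
          rw [Matrix.add_apply, Matrix.one_apply_eq]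
          simp [hF]
        · intro i j hij
          have hij' : i < j := hij
          have h1 : i ≠ j := ne_of_lt hij'
          have h2 : i ≠ ll := by
            intro hh
            rw [hh, hll] at hij'
            exact absurd hij' (not_lt.mpr (Fin.le_last j))
          rw [Matrix.add_apply, Matrix.one_apply_ne h1]
          simp [hF, h2]
      have step1 : ((1 : Matrix (Fin (k+1)) (Fin (k+1)) ℂ) + E) * C
          = Matrix.diagonal d1 * B * Matrix.diagonal d2 := by
        ext i j
        rw [Matrix.add_mul, Matrix.one_mul, Matrix.add_apply, Matrix.mul_apply,
          Matrix.mul_diagonal, Matrix.diagonal_mul]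
        have hEC : ∀ l, E i l * C l j
            = if l = ll then ((if i = ll then 0 else (-1:ℂ)) * C ll j) else 0 := by
          intro l
          by_cases hl : l = ll <;> simp [hE, hl]
        rw [Finset.sum_congr rfl (fun l _ => hEC l), Finset.sum_ite_eq' Finset.univ ll]
        simp only [Finset.mem_univ, if_true]
        by_cases hi : i = ll
        · simp [hC, hB, hd1, hd2, hi]
        · have key : ∀ (a b c : ℂ), a ≠ 0 → b ≠ 0 → b - a = c →
              a⁻¹ + -1 * b⁻¹ = c * a⁻¹ * b⁻¹ := by
            intro a b c ha hb hc
            subst hc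
            field_simp
            ring
          simp only [hC, hB, hd1, hd2, if_neg hi, Matrix.of_apply]
          exact key _ _ _ (hsub i j) (hsub ll j) (by ring)
      have step2 : B * ((1 : Matrix (Fin (k+1)) (Fin (k+1)) ℂ) + F)
          = Matrix.diagonal d3 * B' * Matrix.diagonal d4 := by
        ext i j
        rw [Matrix.mul_add, Matrix.mul_one, Matrix.add_apply, Matrix.mul_apply,
          Matrix.mul_diagonal, Matrix.diagonal_mul]
        have hBF : ∀ l, B i l * F l j
            = if l = ll then (B i ll * (if j = ll then 0 else (-1:ℂ))) else 0 := by
          intro l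
          by_cases hl : l = ll <;> simp [hF, hl]
        rw [Finset.sum_congr rfl (fun l _ => hBF l), Finset.sum_ite_eq' Finset.univ ll]
        simp only [Finset.mem_univ, if_true]
        by_cases hi : i = ll <;> by_cases hj : j = ll
        · simp [hB, hB', hd3, hd4, hi, hj]
        · simp [hB, hB', hd3, hd4, hi, hj]
        · simp [hB, hB', hd3, hd4, hi, hj]
        · have key : ∀ (a b c : ℂ), a ≠ 0 → b ≠ 0 → b - a = c →
              a⁻¹ + b⁻¹ * -1 = b⁻¹ * a⁻¹ * c := by
            intro a b c ha hb hc
            subst hc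
            field_simp
            ring
          simp only [hB, hB', hd3, hd4, Matrix.of_apply, if_neg hi, if_neg hj]
          exact key _ _ _ (hsub i j) (hsub i ll) (by ring)
      have hdetB' : B'.det
          = (Matrix.of fun (i j : Fin k) =>
            ((x ∘ Fin.castSucc) i - (y ∘ Fin.castSucc) j)⁻¹).det := by
        rw [Matrix.det_succ_row B' ll]
        have hterm : ∀ j : Fin (k+1), (-1:ℂ)^((ll:ℕ) + (j:ℕ)) * B' ll j
              * (B'.submatrix ll.succAbove j.succAbove).det
            = if j = ll then (-1:ℂ)^((ll:ℕ)+(ll:ℕ))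
              * (B'.submatrix ll.succAbove ll.succAbove).det else 0 := by
          intro j
          by_cases hj : j = ll
          · subst hj
            simp [hB']
          · simp [hB', hj]
        rw [Finset.sum_congr rfl (fun j _ => hterm j), Finset.sum_ite_eq' Finset.univ ll]
        have heven : (-1:ℂ)^((ll:ℕ)+(ll:ℕ)) = 1 := Even.neg_one_pow ⟨(ll:ℕ), rfl⟩
        simp only [Finset.mem_univ, if_true, heven, one_mul]
        have hsa : ll.succAbove = Fin.castSucc := Fin.succAbove_last
        rw [hsa]
        congr 1
        ext i j
        have hi : i.castSucc ≠ ll := (Fin.castSucc_lt_last i).ne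
        have hj : j.castSucc ≠ ll := (Fin.castSucc_lt_last j).ne
        simp [hB', hi, hj]
      have e1 : C.det = (∏ i, d1 i) * B.det * (∏ j, d2 j) := by
        have := congrArg Matrix.det step1
        rw [Matrix.det_mul, detL, one_mul, Matrix.det_mul, Matrix.det_mul,
          Matrix.det_diagonal, Matrix.det_diagonal] at this
        exact this
      have e2 : B.det = (∏ i, d3 i) * B'.det * (∏ j, d4 j) := by
        have := congrArg Matrix.det step2
        rw [Matrix.det_mul, detR, mul_one, Matrix.det_mul, Matrix.det_mul,
          Matrix.det_diagonal, Matrix.det_diagonal] at this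
        exact this
      -- compute products of the diagonal factors
      have hcs : ∀ i : Fin k, i.castSucc ≠ ll := fun i => (Fin.castSucc_lt_last i).ne
      have hp1 : (∏ i, d1 i) = ∏ i : Fin k, (x ll - x i.castSucc) := by
        rw [Fin.prod_univ_castSucc]
        simp only [hd1, ← hll, if_pos rfl, mul_one]
        exact Finset.prod_congr rfl (fun i _ => by rw [if_neg (hcs i)])
      have hp2 : (∏ j, d2 j) = (∏ j : Fin (k+1), (x ll - y j))⁻¹ := by
        rw [← Finset.prod_inv_distrib]
      have hp3 : (∏ i, d3 i) = (∏ i : Fin k, (x i.castSucc - y ll))⁻¹ := by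
        rw [← Finset.prod_inv_distrib, Fin.prod_univ_castSucc]
        simp only [hd3, ← hll, if_pos rfl, mul_one]
        exact Finset.prod_congr rfl (fun i _ => by rw [if_neg (hcs i)])
      have hp4 : (∏ j, d4 j) = ∏ j : Fin k, (y j.castSucc - y ll) := by
        rw [Fin.prod_univ_castSucc]
        simp only [hd4, ← hll, if_pos rfl, mul_one]
        exact Finset.prod_congr rfl (fun i _ => by rw [if_neg (hcs i)])
      have hIH := IH (x ∘ Fin.castSucc) (y ∘ Fin.castSucc) (fun i j => h _ _)
      -- name the atomic products
      set P1 := ∏ i : Fin k, (x ll - x i.castSucc) with hP1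
      set Q := ∏ j : Fin (k+1), (x ll - y j) with hQ
      set P3 := ∏ i : Fin k, (x i.castSucc - y ll) with hP3
      set P4 := ∏ j : Fin k, (y j.castSucc - y ll) with hP4
      have hQ0 : Q ≠ 0 := Finset.prod_ne_zero_iff.mpr (fun j _ => hsub ll j)
      have hP30 : P3 ≠ 0 := Finset.prod_ne_zero_iff.mpr (fun i _ => hsub i.castSucc ll)
      have hV0 : vdm2 (x ∘ Fin.castSucc) (y ∘ Fin.castSucc) ≠ 0 := by
        rw [vdm2]
        exact Finset.prod_ne_zero_iff.mpr (fun i _ =>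
          Finset.prod_ne_zero_iff.mpr (fun j _ => hsub i.castSucc j.castSucc))
      -- expansion of vdm / vdm2 at the last index
      have hvx : vdm x = vdm (x ∘ Fin.castSucc) * P1 := by
        rw [vdm_snoc x]
      have hvy : vdm y = vdm (y ∘ Fin.castSucc) * ((-1)^k * P4) := by
        rw [vdm_snoc y]
        congr 1
        have : ∀ j : Fin k, y (Fin.last k) - y j.castSucc = (-1) * (y j.castSucc - y (Fin.last k)) := by
          intro j; ring
        rw [Finset.prod_congr rfl (fun j _ => this j), Finset.prod_mul_distrib,
          Finset.prod_const]
        simp [hP4, hll]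
      have hvxy : vdm2 x y = vdm2 (x ∘ Fin.castSucc) (y ∘ Fin.castSucc) * P3 * Q := by
        rw [vdm2_snoc x y, hQ, Fin.prod_univ_castSucc]
        simp only [← hll, Function.comp_apply]
        rw [hP3]
        ring
      have hchoose : (k+1).choose 2 = k.choose 2 + k := by
        rw [Nat.choose_succ_succ, Nat.choose_one_right, Nat.add_comm]
      have hCB : C.det = P1 * Q⁻¹ * (P3⁻¹ * ((-1 : ℂ)^(k.choose 2) * vdm (x ∘ Fin.castSucc)
          * vdm (y ∘ Fin.castSucc) / vdm2 (x ∘ Fin.castSucc) (y ∘ Fin.castSucc)) * P4) := by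
        rw [e1, e2, hdetB', hIH, hp1, hp2, hp3, hp4]
        ring
      rw [hCB, hvx, hvy, hvxy, hchoose, pow_add]
      have he : (-1:ℂ)^(k+k) = 1 := Even.neg_one_pow ⟨k, rfl⟩
      field_simp
      linear_combination (-(P1 * vdm (x ∘ Fin.castSucc) * vdm (y ∘ Fin.castSucc)
        * P4)) * he


/-- The Cauchy-type block determinant identity (Lemma: aux_01). -/
theorem cauchy_block_det
    (m n : ℕ) (u v : Fin m → ℂ) (u' v' : Fin n → ℂ)
    (huv : ∀ i j, u i ≠ v j) (hu'v' : ∀ i j, u' i ≠ v' j)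
    (hu'u : ∀ i j, u' i ≠ u j) (hv'v : ∀ i j, v' i ≠ v j)
    (Ff Gg Ii Jj : ℂ → ℂ) :
    (vdm u * vdm v * vdm u' * vdm v' * vdm2 u' v * vdm2 v' u) /
        (vdm2 u v * vdm2 u' v' * vdm2 u' u * vdm2 v' v) *
        ((∏ i, Ff (u i)) * (∏ i, Gg (v i)) * (∏ i, Ii (u' i)) * ∏ i, Jj (v' i)) =
      (-1 : ℂ) ^ (Nat.choose (n + m) 2 + n + m * n) *
        (Matrix.fromBlocks
          (Matrix.of fun i j => Ff (u i) * Gg (v j) / (u i - v j))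
          (Matrix.of fun i j => Ff (u i) * Ii (u' j) / (u i - u' j))
          (Matrix.of fun i j => Jj (v' i) * Gg (v j) / (v' i - v j))
          (Matrix.of fun i j => Jj (v' i) * Ii (u' j) / (v' i - u' j))).det := by
  set X : Fin (m+n) → ℂ := Fin.append u v' with hX
  set Y : Fin (m+n) → ℂ := Fin.append v u' with hY
  set a : Fin (m+n) → ℂ := Fin.append (fun i => Ff (u i)) (fun i => Jj (v' i)) with ha
  set b : Fin (m+n) → ℂ := Fin.append (fun j => Gg (v j)) (fun j => Ii (u' j)) with hb
  have hXY : ∀ i j, X i ≠ Y j := by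
    intro i j
    induction i using Fin.addCases with
    | left i =>
        induction j using Fin.addCases with
        | left j => simpa [hX, hY, Fin.append_left] using huv i j
        | right j => simpa [hX, hY, Fin.append_left, Fin.append_right] using (hu'u j i).symm
    | right i =>
        induction j using Fin.addCases with
        | left j => simpa [hX, hY, Fin.append_left, Fin.append_right] using hv'v i j
        | right j => simpa [hX, hY, Fin.append_right] using (hu'v' j i).symm
  -- identify the block determinant
  have hM : (Matrix.fromBlocks
          (Matrix.of fun i j => Ff (u i) * Gg (v j) / (u i - v j))
          (Matrix.of fun i j => Ff (u i) * Ii (u' j) / (u i - u' j))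
          (Matrix.of fun i j => Jj (v' i) * Gg (v j) / (v' i - v j))
          (Matrix.of fun i j => Jj (v' i) * Ii (u' j) / (v' i - u' j))).det
      = (Matrix.of fun i j => a i *
          (Matrix.of fun i j => b j * (Matrix.of fun i j => (X i - Y j)⁻¹) i j) i j).det := by
    rw [← Matrix.det_submatrix_equiv_self finSumFinEquiv.symm]
    congr 1
    ext i j
    rw [Matrix.submatrix_apply]
    induction i using Fin.addCases with
    | left i =>
        induction j using Fin.addCases with
        | left j =>
            simp only [finSumFinEquiv_symm_apply_castAdd, Matrix.fromBlocks_apply₁₁,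
              Matrix.of_apply, hX, hY, ha, hb, Fin.append_left]
            rw [div_eq_mul_inv]; ring
        | right j =>
            simp only [finSumFinEquiv_symm_apply_castAdd, finSumFinEquiv_symm_apply_natAdd,
              Matrix.fromBlocks_apply₁₂, Matrix.of_apply, hX, hY, ha, hb,
              Fin.append_left, Fin.append_right]
            rw [div_eq_mul_inv]; ring
    | right i =>
        induction j using Fin.addCases with
        | left j =>
            simp only [finSumFinEquiv_symm_apply_castAdd, finSumFinEquiv_symm_apply_natAdd,
              Matrix.fromBlocks_apply₂₁, Matrix.of_apply, hX, hY, ha, hb,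
              Fin.append_left, Fin.append_right]
            rw [div_eq_mul_inv]; ring
        | right j =>
            simp only [finSumFinEquiv_symm_apply_natAdd, Matrix.fromBlocks_apply₂₂,
              Matrix.of_apply, hX, hY, ha, hb, Fin.append_right]
            rw [div_eq_mul_inv]; ring
  rw [hM, Matrix.det_mul_column, Matrix.det_mul_row, cauchy_det (m+n) X Y hXY]
  -- split the appended products
  have hpa : (∏ i, a i) = (∏ i, Ff (u i)) * ∏ i, Jj (v' i) := by
    rw [ha, Fin.prod_univ_add]
    simp [Fin.append_left, Fin.append_right]
  have hpb : (∏ j, b j) = (∏ j, Gg (v j)) * ∏ j, Ii (u' j) := by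
    rw [hb, Fin.prod_univ_add]
    simp [Fin.append_left, Fin.append_right]
  have hvX : vdm X = vdm u * vdm v' * vdm2 v' u := vdm_append u v'
  have hvY : vdm Y = vdm v * vdm u' * vdm2 u' v := vdm_append v u'
  have hvXY : vdm2 X Y
      = (vdm2 u v * vdm2 u u') * (vdm2 v' v * vdm2 v' u') := by
    rw [hX, hY, vdm2_append_left, vdm2_append_right, vdm2_append_right]
  have hs1 : vdm2 u u' = (-1:ℂ)^(m*n) * vdm2 u' u := vdm2_swap u u'
  have hs2 : vdm2 v' u' = (-1:ℂ)^(n*n) * vdm2 u' v' := vdm2_swap v' u'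
  -- nonvanishing
  have hD1 : vdm2 u v ≠ 0 := by
    rw [vdm2]
    exact Finset.prod_ne_zero_iff.mpr (fun i _ =>
      Finset.prod_ne_zero_iff.mpr (fun j _ => sub_ne_zero.mpr (huv i j)))
  have hD2 : vdm2 u' v' ≠ 0 := by
    rw [vdm2]
    exact Finset.prod_ne_zero_iff.mpr (fun i _ =>
      Finset.prod_ne_zero_iff.mpr (fun j _ => sub_ne_zero.mpr (hu'v' i j)))
  have hD3 : vdm2 u' u ≠ 0 := by
    rw [vdm2]
    exact Finset.prod_ne_zero_iff.mpr (fun i _ =>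
      Finset.prod_ne_zero_iff.mpr (fun j _ => sub_ne_zero.mpr (hu'u i j)))
  have hD4 : vdm2 v' v ≠ 0 := by
    rw [vdm2]
    exact Finset.prod_ne_zero_iff.mpr (fun i _ =>
      Finset.prod_ne_zero_iff.mpr (fun j _ => sub_ne_zero.mpr (hv'v i j)))
  have hne : (-1:ℂ) ≠ 0 := by norm_num
  -- signs
  have hnn : (-1:ℂ)^(n*n) = (-1:ℂ)^n := by
    rcases Nat.even_or_odd n with he | ho
    · rw [Even.neg_one_pow (he.mul_left n), Even.neg_one_pow he]
    · rw [Odd.neg_one_pow (ho.mul ho), Odd.neg_one_pow ho]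
  have hchoose : (n+m).choose 2 = (m+n).choose 2 := by rw [Nat.add_comm]
  rw [hpa, hpb, hvX, hvY, hvXY, hs1, hs2, hnn, hchoose, pow_add, pow_add]
  have hmn1 : (-1:ℂ)^(m*n) * (-1:ℂ)^(m*n) = 1 := by
    rw [← pow_add]
    exact Even.neg_one_pow ⟨m*n, rfl⟩
  have hn1 : (-1:ℂ)^n * (-1:ℂ)^n = 1 := by
    rw [← pow_add]
    exact Even.neg_one_pow ⟨n, rfl⟩
  field_simp
  ring_nf
  have h2 : (-1:ℂ)^((m+n).choose 2 * 2) = 1 := by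
    rw [pow_mul']
    norm_num
  rw [h2, mul_one]
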